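/- Let S/R be a Galois extension of commutative rings of characteristic p with group G of order p^n. Let G̃ be a group of order p^{n+1} with a surjective homomorphism π : G̃ → G and kernel H = ker(π) of order p, let χ : H → F_p be an isomorphism, let u : G → G̃ be a set-theoretic section of π, and let c(σ,τ) = χ(u(σ)u(τ)u(στ)^{-1}) be the associated 2-cocycle with values in F_p ⊂ S. Let (s_σ)_{σ∈G} be a cochain with values in S such that c(σ,τ) = s_σ + σ(s_τ) − s_{στ} for all σ, τ ∈ G, and let d ∈ S satisfy ℘(s_σ) = σ(d) − d for all σ ∈ G, where ℘(X) = X^p − X. Then, viewing T = S[X]/(X^p − X − d) as an extension of S, the group G of automorphisms of S extends to a group of automorphisms of T which is isomorphic to G̃ and makes T/R a Galois extension of rings. -/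

import Mathlib

/-!
STATEMENT 4 (Lemma 1.8(a) of Saltman, quoted as Lemma 3.4(a) in the paper):
Let S/R be a Galois extension of commutative rings of characteristic p with group G of
order p^n.  Let G̃ be a group of order p^{n+1} with a surjection π : G̃ → G whose kernel H
has order p, let χ : H ≅ F_p, let u : G → G̃ be a set-theoretic section of π, and let
c(σ,τ) = χ(u(σ)u(τ)u(στ)⁻¹) be the associated 2-cocycle with values in F_p ⊆ S.  Let
(s_σ) be a cochain with c(σ,τ) = s_σ + σ(s_τ) − s_{στ}, and let d ∈ S satisfy
℘(s_σ) = σ(d) − d for all σ.  Then, with T = S[X]/(X^p − X − d), the group G of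
automorphisms of S extends to a group of automorphisms of T isomorphic to G̃ which makes
T/R a Galois extension of rings.
-/

open Polynomial

theorem aux_conj_inv (p m : ℕ) (hp : p.Prime) (Gt : Type*) [Group Gt] [Fintype Gt]
    (hGt : Fintype.card Gt = p ^ m) (K : Subgroup Gt) [K.Normal]
    (χ : K ≃* Multiplicative (ZMod p)) :
    ∀ (g : Gt) (k : K), χ ⟨g * (k : Gt) * g⁻¹, Subgroup.Normal.conj_mem ‹K.Normal› k k.2 g⟩ = χ k := by
  haveI := Fact.mk hp
  have hmem : ∀ (g : Gt) (x : ZMod p), g * ((χ.symm (Multiplicative.ofAdd x) : K) : Gt) * g⁻¹ ∈ K :=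
    fun g x => Subgroup.Normal.conj_mem ‹K.Normal› _ (χ.symm (Multiplicative.ofAdd x)).2 g
  set b : Gt → ZMod p → ZMod p := fun g x =>
    Multiplicative.toAdd (χ ⟨g * ((χ.symm (Multiplicative.ofAdd x) : K) : Gt) * g⁻¹, hmem g x⟩) with hb
  have hb_cast : ∀ (g : Gt) (k : K) (hk : g * (k : Gt) * g⁻¹ ∈ K),
      Multiplicative.toAdd (χ ⟨g * (k : Gt) * g⁻¹, hk⟩) = b g (Multiplicative.toAdd (χ k)) := by
    intro g k hk
    rw [hb]
    congr 2
    ext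
    simp
  have hb_add : ∀ (g : Gt) (x y : ZMod p), b g (x + y) = b g x + b g y := by
    intro g x y
    rw [hb]
    have h1 : (χ.symm (Multiplicative.ofAdd (x + y)) : K) =
        χ.symm (Multiplicative.ofAdd x) * χ.symm (Multiplicative.ofAdd y) := by
      rw [← map_mul]; rfl
    have h2 : (⟨g * ((χ.symm (Multiplicative.ofAdd (x+y)) : K) : Gt) * g⁻¹, hmem g (x+y)⟩ : K) =
        ⟨g * ((χ.symm (Multiplicative.ofAdd x) : K) : Gt) * g⁻¹, hmem g x⟩ *
        ⟨g * ((χ.symm (Multiplicative.ofAdd y) : K) : Gt) * g⁻¹, hmem g y⟩ := by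
      ext
      push_cast [h1]
      group
    simp only [h2, map_mul]
    rfl
  have hb_smul : ∀ (g : Gt) (x : ZMod p), b g x = x * b g 1 := by
    intro g x
    have key : ∀ (m : ℕ), b g (m : ZMod p) = (m : ZMod p) * b g 1 := by
      intro m
      induction m with
      | zero =>
        simp only [Nat.cast_zero, zero_mul]
        have := hb_add g 0 0
        rw [add_zero] at this
        exact left_eq_add.mp this
      | succ k ih =>
        push_cast
        rw [hb_add, ih]
        ring
    have : x = ((x.val : ℕ) : ZMod p) := by simp [ZMod.natCast_val, ZMod.cast_id]
    rw [this, key]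
  -- t g := b g 1 is "multiplicative" and has order dividing p^m, but lives in ZMod p
  have hb_comp : ∀ (g g' : Gt) (x : ZMod p), b g (b g' x) = b (g * g') x := by
    intro g g' x
    rw [hb]
    have h1 : (χ.symm (Multiplicative.ofAdd (b g' x)) : K) =
        ⟨g' * ((χ.symm (Multiplicative.ofAdd x) : K) : Gt) * g'⁻¹, hmem g' x⟩ := by
      rw [hb]
      simp
    simp only [h1]
    congr 2
    ext
    simp
    group
  have hb_one : ∀ x : ZMod p, b 1 x = x := by
    intro x
    have h1 : (⟨1 * ((χ.symm (Multiplicative.ofAdd x) : K) : Gt) * 1⁻¹, hmem 1 x⟩ : K) =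
        χ.symm (Multiplicative.ofAdd x) := by ext; simp
    show Multiplicative.toAdd
      (χ ⟨1 * ((χ.symm (Multiplicative.ofAdd x) : K) : Gt) * 1⁻¹, hmem 1 x⟩) = x
    rw [h1]
    simp
  have hb_pow : ∀ (g : Gt) (j : ℕ), b g 1 ^ (j + 1) = b (g ^ (j + 1)) 1 := by
    intro g j
    induction j with
    | zero => simp
    | succ k ih =>
      calc b g 1 ^ (k + 1 + 1) = b (g ^ (k + 1)) 1 * b g 1 := by rw [pow_succ, ih]
        _ = b (g ^ (k + 1)) (b g 1) := by rw [hb_smul (g ^ (k + 1)) (b g 1), mul_comm]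
        _ = b (g ^ (k + 1) * g) 1 := hb_comp _ _ _
        _ = b (g ^ (k + 1 + 1)) 1 := by rw [← pow_succ]
  have hb1 : ∀ g : Gt, b g 1 = 1 := by
    intro g
    have hcard : g ^ (p ^ m) = 1 := by
      rw [← hGt]
      exact pow_card_eq_one
    have hm1 : 1 ≤ p ^ m := Nat.one_le_pow _ _ hp.pos
    have h1 : b g 1 ^ (p ^ m) = 1 := by
      obtain ⟨j, hj⟩ : ∃ j, p ^ m = j + 1 := ⟨p ^ m - 1, by omega⟩
      rw [hj] at hcard ⊢
      rw [hb_pow, hcard, hb_one]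
    -- in ZMod p, y ^ (p ^ m) = y by Fermat
    have h2 : ∀ (y : ZMod p) (j : ℕ), y ^ (p ^ j) = y := by
      intro y j
      induction j with
      | zero => simp
      | succ k ih => rw [pow_succ, pow_mul, ih, ZMod.pow_card]
    rw [h2] at h1
    exact h1
  intro g k
  have h := hb_cast g k (Subgroup.Normal.conj_mem ‹K.Normal› k k.2 g)
  apply Multiplicative.toAdd.injective
  rw [h, hb_smul, hb1, mul_one]


theorem aux_taylor_fixed (p : ℕ) (hp : p.Prime) (S : Type*) [CommRing S] [CharP S p]
    (q : S[X]) (hdeg : q.natDegree < p) (hq : Polynomial.taylor 1 q = q) :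
    q = C (q.coeff 0) := by
  haveI := Fact.mk hp
  have hn0 : q.natDegree = 0 := by
    by_contra hn
    set n := q.natDegree with hndef
    have h1 : (Polynomial.taylor 1 q).coeff (n - 1) = q.coeff (n - 1) := by rw [hq]
    rw [taylor_coeff] at h1
    have hdeg2 : (Polynomial.hasseDeriv (n - 1) q).natDegree < 2 :=
      lt_of_le_of_lt (natDegree_hasseDeriv_le _ _) (by omega)
    rw [eval_eq_sum_range' hdeg2] at h1
    rw [Finset.sum_range_succ, Finset.sum_range_succ, Finset.sum_range_zero] at h1
    simp only [zero_add, one_pow, mul_one, pow_zero] at h1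
    rw [hasseDeriv_coeff, hasseDeriv_coeff] at h1
    have e0 : 0 + (n - 1) = n - 1 := by omega
    have e1 : 1 + (n - 1) = n := by omega
    rw [e0, e1] at h1
    rw [Nat.choose_self] at h1
    have e2 : n.choose (n - 1) = n := by
      rw [Nat.choose_symm (by omega : 1 ≤ n), Nat.choose_one_right]
    rw [e2] at h1
    push_cast at h1
    have h2 : (n : S) * q.coeff n = 0 := by linear_combination h1
    have hnp : ¬ (p ∣ n) := by
      intro hdvd
      have := Nat.le_of_dvd (by omega) hdvd
      omega
    have hunit : ((n : ZMod p)) ≠ 0 := by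
      rwa [Ne, ZMod.natCast_eq_zero_iff]
    have h3 : (n : S) * (ZMod.castHom (dvd_refl p) S) ((n : ZMod p)⁻¹) = 1 := by
      rw [← map_natCast (ZMod.castHom (dvd_refl p) S) n, ← map_mul,
        mul_inv_cancel₀ hunit, map_one]
    have h4 : q.coeff n = 0 := by
      have := congrArg (· * (ZMod.castHom (dvd_refl p) S) ((n : ZMod p)⁻¹)) h2
      simp only [zero_mul] at this
      rw [mul_comm (n : S) (q.coeff n), mul_assoc, h3, mul_one] at this
      exact this
    have hq0 : q ≠ 0 := fun h => hn (by rw [hndef, h, natDegree_zero])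
    exact (Polynomial.leadingCoeff_ne_zero.mpr hq0) h4
  exact Polynomial.eq_C_of_natDegree_eq_zero hn0




theorem saltman_lemma_a
    (p n : ℕ) (hp : p.Prime) (S : Type*) [CommRing S] [CharP S p]
    (G : Type*) [Group G] [Fintype G] (hG : Fintype.card G = p ^ n)
    [MulSemiringAction G S]
    (hfaithful : ∀ σ : G, (∀ s : S, σ • s = s) → σ = 1)
    -- S/R is Galois with group G, R = S^G:
    (hgalois : ∀ M : Ideal S, M.IsMaximal → ∀ σ : G, σ ≠ 1 → ∃ s : S, σ • s - s ∉ M)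
    (Gt : Type*) [Group Gt] [Fintype Gt] (hGt : Fintype.card Gt = p ^ (n + 1))
    (π : Gt →* G) (hπ : Function.Surjective π) (hker : Nat.card π.ker = p)
    (χ : π.ker ≃* Multiplicative (ZMod p))
    (u : G → Gt) (hu : ∀ g : G, π (u g) = g)
    (hmem : ∀ σ τ : G, u σ * u τ * (u (σ * τ))⁻¹ ∈ π.ker)
    (s_ : G → S)
    -- the cochain (s_σ) splits the 2-cocycle c(σ,τ) = χ(u(σ)u(τ)u(στ)⁻¹):
    (hs : ∀ σ τ : G,
      (ZMod.castHom (dvd_refl p) S) (Multiplicative.toAdd (χ ⟨_, hmem σ τ⟩)) =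
        s_ σ + σ • s_ τ - s_ (σ * τ))
    (d : S) (hd : ∀ σ : G, s_ σ ^ p - s_ σ = σ • d - d) :
    ∃ ρ : Gt →* RingAut (AdjoinRoot (X ^ p - X - C d)),
      -- the group of automorphisms is isomorphic to G̃
      Function.Injective ρ ∧
      -- it extends the action of G on S
      (∀ g : Gt, ∀ x : S,
        ρ g (algebraMap S (AdjoinRoot (X ^ p - X - C d)) x) =
          algebraMap S (AdjoinRoot (X ^ p - X - C d)) (π g • x)) ∧
      -- the fixed ring of G̃ acting on T is R = S^G
      (∀ t : AdjoinRoot (X ^ p - X - C d),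
        (∀ g : Gt, ρ g t = t) ↔
          ∃ x : S, (∀ σ : G, σ • x = x) ∧
            algebraMap S (AdjoinRoot (X ^ p - X - C d)) x = t) ∧
      -- T/R is a Galois extension of rings with group G̃
      (∀ M : Ideal (AdjoinRoot (X ^ p - X - C d)), M.IsMaximal →
        ∀ g : Gt, g ≠ 1 → ∃ t : AdjoinRoot (X ^ p - X - C d), ρ g t - t ∉ M) := by
  haveI := Fact.mk hp
  haveI hS : Nontrivial S := by
    rw [← not_subsingleton_iff_nontrivial]
    intro h
    have h1 : ((1 : ℕ) : S) = 0 := Subsingleton.elim _ _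
    exact hp.one_lt.ne' (Nat.dvd_one.mp ((CharP.cast_eq_zero_iff S p 1).mp h1))
  set f : S[X] := X ^ p - X - C d with hf
  have hfeq : f = X ^ p - (X + C d) := by rw [hf]; ring
  have hmonic : f.Monic := by
    rw [hfeq]
    refine monic_X_pow_sub ?_
    refine lt_of_le_of_lt (degree_add_le _ _) ?_
    rw [degree_X]
    refine max_lt ?_ (lt_of_le_of_lt degree_C_le ?_)
    · exact_mod_cast hp.one_lt
    · exact_mod_cast hp.pos
  have hfdeg : f.natDegree = p := by
    rw [hfeq]
    rw [natDegree_sub_eq_left_of_natDegree_lt]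
    · exact natDegree_X_pow p
    · refine lt_of_le_of_lt (natDegree_add_le _ _) ?_
      simp [hp.one_lt]
  set T := AdjoinRoot f with hT
  set A := algebraMap S T with hA
  set α := AdjoinRoot.root f with hα
  have hinj : Function.Injective A := by
    intro x y hxy
    have h2 : ∀ z : S, AdjoinRoot.modByMonicHom hmonic (A z) = C z := by
      intro z
      rw [hA, AdjoinRoot.algebraMap_eq, AdjoinRoot.of, RingHom.comp_apply,
        AdjoinRoot.modByMonicHom_mk]
      rw [Polynomial.modByMonic_eq_self_iff hmonic]
      refine lt_of_le_of_lt degree_C_le ?_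
      rw [degree_eq_natDegree hmonic.ne_zero, hfdeg]
      exact_mod_cast hp.pos
    have := congrArg (AdjoinRoot.modByMonicHom hmonic) hxy
    rw [h2, h2] at this
    exact C_injective this
  haveI : CharP T p := charP_of_injective_algebraMap hinj p
  -- the root satisfies α^p = α + d
  have hαp : α ^ p = α + A d := by
    have h1 : AdjoinRoot.mk f (X ^ p - X - C d) = α ^ p - α - A d := by
      rw [map_sub, map_sub, map_pow, AdjoinRoot.mk_X, AdjoinRoot.mk_C]
      rfl
    have h0 : AdjoinRoot.mk f (X ^ p - X - C d) = 0 := AdjoinRoot.mk_self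
    rw [h1] at h0
    linear_combination h0
  -- notation for the canonical map ZMod p → S
  set cst : ZMod p →+* S := ZMod.castHom (dvd_refl p) S with hcst
  have hsmul_cast : ∀ (σ : G) (x : ZMod p), σ • (cst x : S) = cst x := by
    intro σ x
    have h1 : (cst x : S) = ((x.val : ℕ) : S) := by
      rw [hcst, ZMod.castHom_apply, ZMod.natCast_val]
    rw [h1]
    exact map_natCast (MulSemiringAction.toRingHom G S σ) x.val
  have hker' : ∀ g : Gt, g * (u (π g))⁻¹ ∈ π.ker := by
    intro g
    rw [MonoidHom.mem_ker, map_mul, map_inv, hu, mul_inv_cancel]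
  set e : Gt → S := fun g =>
    s_ (π g) + cst (Multiplicative.toAdd (χ ⟨g * (u (π g))⁻¹, hker' g⟩)) with he
  have he_apply : ∀ g : Gt,
      e g = s_ (π g) + cst (Multiplicative.toAdd (χ ⟨g * (u (π g))⁻¹, hker' g⟩)) :=
    fun g => rfl
  -- e g ^ p = e g + (π g • d - d)
  have hcst_pow : ∀ x : ZMod p, (cst x : S) ^ p = cst x := by
    intro x
    rw [← map_pow, ZMod.pow_card]
  have he_pow : ∀ g : Gt, e g ^ p = e g + ((π g) • d - d) := by
    intro g
    rw [he_apply, add_pow_char, hcst_pow]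
    have := hd (π g)
    linear_combination this
  -- the root condition for the lifted endomorphism
  have hroot : ∀ g : Gt,
      f.eval₂ (A.comp (MulSemiringAction.toRingHom G S (π g))) (α + A (e g)) = 0 := by
    intro g
    have h1 := congrArg
      (eval₂ (A.comp (MulSemiringAction.toRingHom G S (π g))) (α + A (e g))) hf
    rw [h1]
    simp only [eval₂_sub, eval₂_pow, eval₂_X, eval₂_C, RingHom.comp_apply]
    rw [add_pow_char, hαp, ← map_pow A, he_pow]
    show α + A d + A (e g + (π g • d - d)) - (α + A (e g)) - A (π g • d) = 0
    rw [map_add, map_sub]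
    ring
  set ρ' : Gt → (T →+* T) := fun g =>
    AdjoinRoot.lift (A.comp (MulSemiringAction.toRingHom G S (π g))) (α + A (e g)) (hroot g)
    with hρ'
  have hρS : ∀ (g : Gt) (x : S), ρ' g (A x) = A ((π g) • x) := by
    intro g x
    exact AdjoinRoot.lift_of (hroot g)
  have hρα : ∀ g : Gt, ρ' g α = α + A (e g) := by
    intro g
    exact AdjoinRoot.lift_root (hroot g)
  -- extensionality principle for ring homs out of T
  have ext2 : ∀ (F₁ F₂ : T →+* T), (∀ x : S, F₁ (A x) = F₂ (A x)) → F₁ α = F₂ α → F₁ = F₂ := by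
    intro F₁ F₂ hC hX
    apply RingHom.ext; intro t
    obtain ⟨q, rfl⟩ := AdjoinRoot.mk_surjective t
    rw [← AdjoinRoot.aeval_eq]
    induction q using Polynomial.induction_on with
    | C a =>
      have h1 : (aeval α) (C a) = A a := by rw [aeval_C]
      rw [h1]
      exact hC a
    | add q r hq hr => rw [map_add, map_add, map_add]; rw [hq, hr]
    | monomial m a ih =>
      have h1 : (aeval α) (C a * X ^ (m + 1)) = A a * α ^ (m + 1) := by
        rw [map_mul, map_pow, aeval_X, aeval_C]
      rw [h1, map_mul, map_mul, map_pow, map_pow, hC, hX]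
  -- conjugation invariance of χ
  have hconj := aux_conj_inv p (n + 1) hp Gt hGt π.ker χ
  -- the cocycle identity for e
  have hsub : ∀ g g' : Gt, (⟨g * g' * (u (π (g * g')))⁻¹, hker' (g * g')⟩ : π.ker) =
      ⟨g * (u (π g))⁻¹, hker' g⟩ *
      ⟨u (π g) * ((⟨g' * (u (π g'))⁻¹, hker' g'⟩ : π.ker) : Gt) * (u (π g))⁻¹,
        Subgroup.Normal.conj_mem inferInstance _
          (⟨g' * (u (π g'))⁻¹, hker' g'⟩ : π.ker).2 (u (π g))⟩ *
      ⟨u (π g) * u (π g') * (u (π g * π g'))⁻¹, hmem (π g) (π g')⟩ := by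
    intro g g'
    ext
    push_cast
    rw [map_mul π]
    group
  have he_mul : ∀ g g' : Gt, e (g * g') = e g + (π g) • e g' := by
    intro g g'
    have h1 := congrArg (fun k => Multiplicative.toAdd (χ k)) (hsub g g')
    simp only [map_mul, toAdd_mul] at h1
    rw [hconj (u (π g)) ⟨g' * (u (π g'))⁻¹, hker' g'⟩] at h1
    have h2 := hs (π g) (π g')
    have h3 := congrArg (fun z : ZMod p => (cst z : S)) h1
    simp only [map_add] at h3
    have h4 : π (g * g') = π g * π g' := map_mul π g g'
    -- rewrite the dependent subtype argument along h4
    have h5 : e (g * g') = s_ (π g * π g') +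
        cst (Multiplicative.toAdd (χ ⟨g * g' * (u (π (g * g')))⁻¹, hker' (g * g')⟩)) := by
      rw [he_apply, show s_ (π (g * g')) = s_ (π g * π g') from congrArg s_ h4]
    have h6 : (π g) • e g' = (π g) • s_ (π g') +
        cst (Multiplicative.toAdd (χ ⟨g' * (u (π g'))⁻¹, hker' g'⟩)) := by
      rw [he_apply, smul_add, hsmul_cast]
    have h7 : (⟨g * g' * (u (π (g * g')))⁻¹, hker' (g * g')⟩ : π.ker) =
        ⟨g * g' * (u (π g * π g'))⁻¹, by rw [← h4]; exact hker' _⟩ := by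
      ext
      show g * g' * (u (π (g * g')))⁻¹ = g * g' * (u (π g * π g'))⁻¹
      exact congrArg (fun σ => g * g' * (u σ)⁻¹) h4
    have h8 := congrArg (fun k => (cst (Multiplicative.toAdd (χ k)) : S)) h7
    rw [h5, he_apply g, h6]
    linear_combination h2 + h3 + h8
  -- multiplicativity of ρ'
  have hρmul : ∀ g g' : Gt, ρ' (g * g') = (ρ' g).comp (ρ' g') := by
    intro g g'
    apply ext2
    · intro x
      rw [RingHom.comp_apply, hρS, hρS, hρS, map_mul, mul_smul]
    · rw [RingHom.comp_apply, hρα g', map_add, hρα g, hρS, hρα, he_mul, map_add]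
      ring
  have h1mem : u 1 ∈ π.ker := by rw [MonoidHom.mem_ker, hu]
  have hs1 : cst (Multiplicative.toAdd (χ ⟨u 1, h1mem⟩)) = s_ 1 := by
    have h2 : (⟨u 1 * u 1 * (u ((1 : G) * 1))⁻¹, hmem 1 1⟩ : π.ker) = ⟨u 1, h1mem⟩ := by
      ext
      show u 1 * u 1 * (u ((1 : G) * 1))⁻¹ = u 1
      rw [show ((1 : G) * 1) = 1 from mul_one 1]
      group
    have h8 := congrArg (fun k => (cst (Multiplicative.toAdd (χ k)) : S)) h2
    have h := hs 1 1
    rw [h8] at h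
    rw [one_smul, show s_ ((1 : G) * 1) = s_ 1 from congrArg s_ (mul_one 1)] at h
    linear_combination h
  have he1 : e 1 = 0 := by
    have h9 : (⟨(1 : Gt) * (u (π 1))⁻¹, hker' 1⟩ : π.ker) = (⟨u 1, h1mem⟩ : π.ker)⁻¹ := by
      ext
      show (1 : Gt) * (u (π 1))⁻¹ = (u 1)⁻¹
      rw [map_one π, one_mul]
    have h10 := congrArg (fun k => (cst (Multiplicative.toAdd (χ k)) : S)) h9
    simp only [map_inv, toAdd_inv, map_neg] at h10
    rw [he_apply, show s_ (π (1 : Gt)) = s_ 1 from congrArg s_ (map_one π), h10, ← hs1]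
    ring
  have hρone : ρ' 1 = RingHom.id T := by
    apply ext2
    · intro x
      rw [hρS, RingHom.id_apply, map_one, one_smul]
    · rw [hρα, he1, map_zero, add_zero, RingHom.id_apply]
  have hcomp : ∀ (g g' : Gt) (t : T), ρ' g (ρ' g' t) = ρ' (g * g') t := by
    intro g g' t
    rw [hρmul]
    rfl
  have hid : ∀ t : T, ρ' 1 t = t := fun t => by rw [hρone]; rfl
  -- the value of e on kernel elements
  have he_ker : ∀ (g : Gt) (hg1 : π g = 1),
      e g = cst (Multiplicative.toAdd (χ ⟨g, MonoidHom.mem_ker.mpr hg1⟩)) := by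
    intro g hg1
    have h9 : (⟨g * (u (π g))⁻¹, hker' g⟩ : π.ker) =
        ⟨g, MonoidHom.mem_ker.mpr hg1⟩ * (⟨u 1, h1mem⟩ : π.ker)⁻¹ := by
      ext
      show g * (u (π g))⁻¹ = g * (u 1)⁻¹
      rw [hg1]
    have h10 := congrArg (fun k => (cst (Multiplicative.toAdd (χ k)) : S)) h9
    simp only [map_mul, map_inv, toAdd_mul, toAdd_inv, map_add, map_neg] at h10
    rw [he_apply, show s_ (π g) = s_ 1 from congrArg s_ hg1, h10, ← hs1]
    ring
  have hcstinj : Function.Injective cst := cst.injective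
  -- elements of Gt acting trivially are trivial
  have hGinj : ∀ g : Gt, (∀ t : T, ρ' g t = t) → g = 1 := by
    intro g hg
    have hπg : π g = 1 := by
      apply hfaithful
      intro x
      apply hinj
      rw [← hρS g x, hg]
    have hgker : g ∈ π.ker := MonoidHom.mem_ker.mpr hπg
    have h1 : A (e g) = 0 := by
      have h := hg α
      rw [hρα] at h
      linear_combination h
    have h2 : e g = 0 := by
      apply hinj
      rw [h1, map_zero]
    rw [he_ker g hπg] at h2
    have h3 : Multiplicative.toAdd (χ ⟨g, hgker⟩) = 0 := by
      apply hcstinj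
      rw [h2, map_zero]
    have h4 : χ ⟨g, hgker⟩ = 1 := by
      have := congrArg Multiplicative.ofAdd h3
      simpa using this
    have h5 : (⟨g, hgker⟩ : π.ker) = 1 := χ.injective (by rw [h4, map_one])
    simpa using Subtype.ext_iff.mp h5
  -- the distinguished kernel element g0 with e g0 = 1
  set k0 : ZMod p := 1 - Multiplicative.toAdd (χ ⟨u 1, h1mem⟩) with hk0
  set g0 : Gt := ((χ.symm (Multiplicative.ofAdd k0) : π.ker) : Gt) * u 1 with hg0
  have hπg0 : π g0 = 1 := by
    rw [hg0, map_mul, hu]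
    rw [MonoidHom.mem_ker.mp (χ.symm (Multiplicative.ofAdd k0)).2, one_mul]
  have heg0 : e g0 = 1 := by
    have h9 : (⟨g0, MonoidHom.mem_ker.mpr hπg0⟩ : π.ker) =
        χ.symm (Multiplicative.ofAdd k0) * ⟨u 1, h1mem⟩ := by
      ext
      push_cast
      rw [hg0]
    have h10 := congrArg (fun k => (cst (Multiplicative.toAdd (χ k)) : S)) h9
    simp only [map_mul, toAdd_mul, map_add, MulEquiv.apply_symm_apply, toAdd_ofAdd] at h10
    rw [he_ker g0 hπg0, h10, hk0, map_sub, map_one]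
    ring
  -- assemble the monoid homomorphism into the ring automorphisms
  have mkeq1 : ∀ g : Gt, (ρ' g⁻¹).comp (ρ' g) = RingHom.id T := by
    intro g
    exact RingHom.ext fun t => by rw [RingHom.comp_apply, hcomp, inv_mul_cancel, hid, RingHom.id_apply]
  have mkeq2 : ∀ g : Gt, (ρ' g).comp (ρ' g⁻¹) = RingHom.id T := by
    intro g
    exact RingHom.ext fun t => by rw [RingHom.comp_apply, hcomp, mul_inv_cancel, hid, RingHom.id_apply]
  have main : ∃ ρfun : Gt →* RingAut T, ∀ (g : Gt) (t : T), ρfun g t = ρ' g t := by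
    refine ⟨MonoidHom.mk'
      (fun g => RingEquiv.ofRingHom (ρ' g) (ρ' g⁻¹) (mkeq2 g) (mkeq1 g)) ?_, fun g t => rfl⟩
    intro g g'
    exact RingEquiv.ext fun t => (hcomp g g' t).symm
  obtain ⟨ρ, hρapp⟩ := main
  refine ⟨ρ, ?_, ?_, ?_, ?_⟩
  · -- injectivity
    rw [injective_iff_map_eq_one]
    intro g hg
    refine hGinj g fun t => ?_
    rw [← hρapp g t, hg]
    rfl
  · -- extends the action of G
    intro g x
    rw [hρapp, hρS]
  · -- fixed ring
    intro t
    constructor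
    · intro ht
      set q : S[X] := AdjoinRoot.modByMonicHom hmonic t with hq
      have hqt : AdjoinRoot.mk f q = t := AdjoinRoot.mk_leftInverse hmonic t
      have hqdeg : q.natDegree < p := by
        rcases eq_or_ne q 0 with h | h
        · rw [h, natDegree_zero]; exact hp.pos
        · obtain ⟨r, hr⟩ := AdjoinRoot.mk_surjective t
          have hq2 : q = r %ₘ f := by rw [hq, ← hr, AdjoinRoot.modByMonicHom_mk]
          have hlt : q.degree < f.degree := by
            rw [hq2]; exact degree_modByMonic_lt r hmonic
          rw [degree_eq_natDegree hmonic.ne_zero, hfdeg] at hlt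
          exact (natDegree_lt_iff_degree_lt h).mpr hlt
      set Φ : T →ₐ[S] T :=
        { toRingHom := ρ' g0
          commutes' := fun x => by
            show ρ' g0 (A x) = A x
            rw [hρS, hπg0, one_smul] } with hΦ
      have hΦt : Φ t = t := by
        have h := ht g0
        rw [hρapp] at h
        exact h
      have hΦα : Φ α = α + 1 := by
        show ρ' g0 α = α + 1
        rw [hρα, heg0, map_one]
      have h2 : (aeval (α + 1)) q = (aeval α) q := by
        have h3 := Polynomial.aeval_algHom_apply Φ α q
        rw [hΦα] at h3
        rw [h3]
        show Φ ((aeval α) q) = (aeval α) q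
        rw [AdjoinRoot.aeval_eq, hqt, hΦt]
      have h5 : AdjoinRoot.mk f (Polynomial.taylor 1 q) = (aeval (α + 1)) q := by
        rw [← AdjoinRoot.aeval_eq, Polynomial.taylor_apply, Polynomial.aeval_comp]
        congr 1
        rw [map_add, aeval_X, aeval_C, map_one]
      have h4 : AdjoinRoot.mk f (Polynomial.taylor 1 q - q) = 0 := by
        rw [map_sub, h5, h2, AdjoinRoot.aeval_eq, sub_self]
      have hdvd : f ∣ (Polynomial.taylor 1 q - q) := AdjoinRoot.mk_eq_zero.mp h4
      have h6 : Polynomial.taylor 1 q = q := by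
        have h7 : (Polynomial.taylor 1 q - q) %ₘ f = 0 :=
          (modByMonic_eq_zero_iff_dvd hmonic).mpr hdvd
        have h8 : (Polynomial.taylor 1 q - q) %ₘ f = Polynomial.taylor 1 q - q := by
          rw [modByMonic_eq_self_iff hmonic]
          have hnd : (Polynomial.taylor 1 q - q).natDegree < p :=
            lt_of_le_of_lt (natDegree_sub_le _ _) (by rw [natDegree_taylor]; omega)
          calc (Polynomial.taylor 1 q - q).degree
              ≤ ((Polynomial.taylor 1 q - q).natDegree : WithBot ℕ) := degree_le_natDegree
            _ < (p : WithBot ℕ) := by exact_mod_cast hnd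
            _ = f.degree := by rw [degree_eq_natDegree hmonic.ne_zero, hfdeg]
        rw [h8] at h7
        exact sub_eq_zero.mp h7
      have hqC : q = C (q.coeff 0) := aux_taylor_fixed p hp S q hqdeg h6
      have htA : A (q.coeff 0) = t := by
        rw [← hqt]
        conv_rhs => rw [hqC]
        rw [AdjoinRoot.mk_C]
        rfl
      refine ⟨q.coeff 0, ?_, htA⟩
      intro σ
      obtain ⟨g, hgσ⟩ := hπ σ
      apply hinj
      rw [← hgσ, ← hρS g (q.coeff 0), htA]
      have h := ht g
      rw [hρapp] at h
      rw [h, ← htA]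
    · rintro ⟨x, hx, rfl⟩
      intro g
      rw [hρapp, hρS, hx]
  · -- the Galois condition for T
    intro M hM g hg1
    rcases eq_or_ne (π g) 1 with hπg | hπg
    · -- g in the kernel: use the root α
      refine ⟨α, ?_⟩
      rw [hρapp, hρα]
      have h1 : α + A (e g) - α = A (e g) := by ring
      rw [h1]
      have hgker : g ∈ π.ker := MonoidHom.mem_ker.mpr hπg
      rw [he_ker g hπg]
      have hy0 : Multiplicative.toAdd (χ ⟨g, hgker⟩) ≠ 0 := by
        intro h0
        apply hg1
        have h4 : χ ⟨g, hgker⟩ = 1 := by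
          have := congrArg Multiplicative.ofAdd h0
          simpa using this
        have h5 : (⟨g, hgker⟩ : π.ker) = 1 := χ.injective (by rw [h4, map_one])
        simpa using Subtype.ext_iff.mp h5
      have hunit : IsUnit (A (cst (Multiplicative.toAdd (χ ⟨g, hgker⟩)))) := by
        refine IsUnit.of_mul_eq_one (A (cst (Multiplicative.toAdd (χ ⟨g, hgker⟩))⁻¹)) ?_
        rw [← map_mul, ← map_mul, mul_inv_cancel₀ hy0, map_one, map_one]
      intro hmem'
      exact hM.ne_top (M.eq_top_of_isUnit_mem hmem' hunit)
    · -- g acts nontrivially on S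
      haveI : Module.Finite S T := Module.Finite.of_basis (AdjoinRoot.powerBasis' hmonic).basis
      haveI : Algebra.IsIntegral S T := Algebra.IsIntegral.of_finite S T
      have hMc : (M.comap A).IsMaximal := Ideal.isMaximal_comap_of_isIntegral_of_isMaximal M
      obtain ⟨s, hsM⟩ := hgalois (M.comap A) hMc (π g) hπg
      refine ⟨A s, ?_⟩
      rw [hρapp, hρS]
      intro hmem'
      apply hsM
      rw [Ideal.mem_comap, map_sub]
      exact hmem'
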